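/- For every integer n ≥ 1 there exist an integer ℓ ≥ 1 with (ℓ + 1)·(n + 1) ≤ 2^{n+2} (i.e. ℓ ≤ 2^{n+2}/(n+1) − 1) and subsets T^{(1)}, …, T^{(ℓ)} of F_2^n \ {0} such that: (1) each T^{(i)} has exactly n elements; (2) for each i, the n vectors in T^{(i)} are linearly independent over F_2; (3) the union of T^{(1)}, …, T^{(ℓ)} equals F_2^n \ {0}. -/

import Mathlib

open Module
open scoped IntermediateField

private lemma aux_bound (n : ℕ) (hn : 1 ≤ n) :
    ((2 ^ n - 2) / n + 1 + 1) * (n + 1) ≤ 2 ^ (n + 2) := by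
  have hP : n + 1 ≤ 2 ^ n := Nat.lt_two_pow_self
  have hq : n * ((2 ^ n - 2) / n) ≤ 2 ^ n - 2 := Nat.mul_div_le _ _
  set q := (2 ^ n - 2) / n with hqdef
  have key : n * (((q + 1) + 1) * (n + 1)) ≤ n * 2 ^ (n + 2) := by
    have h4 : 2 ^ (n + 2) = 4 * 2 ^ n := by ring
    rw [h4]
    have hq' : n * q + 2 ≤ 2 ^ n := by omega
    nlinarith [hP, hq', hn]
  exact Nat.le_of_mul_le_mul_left key (by omega)

theorem exists_linearly_independent_cover (n : ℕ) (hn : 1 ≤ n) :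
    ∃ ℓ : ℕ, 1 ≤ ℓ ∧ (ℓ + 1) * (n + 1) ≤ 2 ^ (n + 2) ∧
      ∃ T : Fin ℓ → Finset (Fin n → ZMod 2),
        (∀ i, (T i).card = n) ∧
        (∀ i, LinearIndependent (ZMod 2)
          (Subtype.val : {x // x ∈ T i} → (Fin n → ZMod 2))) ∧
        Finset.univ.biUnion T = Finset.univ \ {0} := by
  classical
  have hn0 : n ≠ 0 := by omega
  have h2n : 2 ≤ 2 ^ n := by
    calc 2 ≤ n + 1 := by omega
    _ ≤ 2 ^ n := Nat.lt_two_pow_self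
  set K := GaloisField 2 n with hK
  haveI : Fintype K := Fintype.ofFinite K
  have hcardK : Fintype.card K = 2 ^ n := by
    rw [← Nat.card_eq_fintype_card, GaloisField.card 2 n hn0]
  have hcardU : Fintype.card Kˣ = 2 ^ n - 1 := by
    rw [Fintype.card_units, hcardK]
  obtain ⟨g, hg⟩ := IsCyclic.exists_generator (α := Kˣ)
  set a : K := (g : K) with ha
  have ha0 : a ≠ 0 := g.ne_zero
  have horder : orderOf g = 2 ^ n - 1 := by
    rw [orderOf_eq_card_of_forall_mem_zpowers hg, Nat.card_eq_fintype_card, hcardU]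
  -- every nonzero element is a small natural power of `a`
  have hpow : ∀ y : K, y ≠ 0 → ∃ k : ℕ, k < 2 ^ n - 1 ∧ a ^ k = y := by
    intro y hy
    obtain ⟨u, hu⟩ := isUnit_iff_ne_zero.mpr hy
    obtain ⟨k, hk⟩ := (isOfFinOrder_of_finite g).mem_powers_iff_mem_zpowers.mpr (hg u)
    refine ⟨k % (2 ^ n - 1), Nat.mod_lt _ (by omega), ?_⟩
    have h1 : g ^ (k % (2 ^ n - 1)) = g ^ k := by
      rw [← horder, pow_mod_orderOf]
    calc a ^ (k % (2 ^ n - 1)) = ((g ^ (k % (2 ^ n - 1)) : Kˣ) : K) := by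
          rw [Units.val_pow_eq_pow_val]
    _ = ((g ^ k : Kˣ) : K) := by rw [h1]
    _ = y := by have hk' : g ^ k = u := hk; rw [hk', hu]
  -- the minimal polynomial of `a` has degree `n`
  have hadj : (ZMod 2)⟮a⟯ = ⊤ := by
    rw [eq_top_iff]
    intro x _
    by_cases hx : x = 0
    · exact hx ▸ zero_mem _
    · obtain ⟨k, _, hk⟩ := hpow x hx
      rw [← hk]
      exact pow_mem (IntermediateField.mem_adjoin_simple_self _ a) k
  have hint : IsIntegral (ZMod 2) a := .of_finite _ _
  have hdeg : (minpoly (ZMod 2) a).natDegree = n := by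
    have h1 := IntermediateField.adjoin.finrank hint
    rw [hadj, IntermediateField.finrank_top'] at h1
    rw [← h1, GaloisField.finrank 2 hn0]
  have hli0 : LinearIndependent (ZMod 2) fun i : Fin n => a ^ (i : ℕ) := by
    have h := linearIndependent_pow (K := ZMod 2) a
    rw [hdeg] at h
    exact h
  -- the linear equivalence with `Fin n → ZMod 2`
  let e : K ≃ₗ[ZMod 2] (Fin n → ZMod 2) :=
    LinearEquiv.ofFinrankEq K (Fin n → ZMod 2)
      (by rw [GaloisField.finrank 2 hn0, Module.finrank_fin_fun])
  -- consecutive powers of `a` are linearly independent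
  have hLI : ∀ c : ℕ,
      LinearIndependent (ZMod 2) fun j : Fin n => e (a ^ (c + (j : ℕ))) := by
    intro c
    have hker : LinearMap.ker (LinearMap.mulLeft (ZMod 2) (a ^ c)) = ⊥ := by
      rw [LinearMap.ker_eq_bot]
      intro x y hxy
      exact mul_left_cancel₀ (pow_ne_zero c ha0) hxy
    have h1 := hli0.map' _ hker
    have h2 : (LinearMap.mulLeft (ZMod 2) (a ^ c)) ∘ (fun i : Fin n => a ^ (i : ℕ))
        = fun j : Fin n => a ^ (c + (j : ℕ)) := by
      funext j
      simp [LinearMap.mulLeft_apply, pow_add]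
    rw [h2] at h1
    have h3 := h1.map' e.toLinearMap e.ker
    exact h3
  -- the construction
  set ℓ : ℕ := (2 ^ n - 2) / n + 1 with hℓ
  refine ⟨ℓ, Nat.le_add_left 1 _, aux_bound n hn, ?_⟩
  set c : Fin ℓ → ℕ := fun i => min ((i : ℕ) * n) (2 ^ n - 1 - n) with hc
  set T : Fin ℓ → Finset (Fin n → ZMod 2) :=
    fun i => Finset.image (fun j : Fin n => e (a ^ (c i + (j : ℕ)))) Finset.univ with hT
  refine ⟨T, ?_, ?_, ?_⟩
  · intro i
    rw [hT]
    rw [Finset.card_image_of_injective _ (hLI (c i)).injective, Finset.card_univ,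
      Fintype.card_fin]
  · intro i
    have h : LinearIndependent (ZMod 2)
        (Subtype.val : Set.range (fun j : Fin n => e (a ^ (c i + (j : ℕ)))) → _) :=
      (linearIndepOn_id_range_iff (hLI (c i)).injective).mpr (hLI (c i))
    have hrange : Set.range (fun j : Fin n => e (a ^ (c i + (j : ℕ)))) = (T i : Set _) := by
      rw [hT]
      simp
    rw [hrange] at h
    exact h
  · ext x
    simp only [Finset.mem_biUnion, Finset.mem_univ, true_and, Finset.mem_sdiff,
      Finset.mem_singleton]
    constructor
    · rintro ⟨i, hx⟩
      rw [hT] at hx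
      simp only [Finset.mem_image, Finset.mem_univ, true_and] at hx
      obtain ⟨j, rfl⟩ := hx
      intro h0
      have h1 : a ^ (c i + (j : ℕ)) = 0 := by
        apply e.injective
        rw [h0, map_zero]
      exact pow_ne_zero _ ha0 h1
    · intro hx
      have hy : e.symm x ≠ 0 := fun h => hx (by rw [← e.apply_symm_apply x, h, map_zero])
      obtain ⟨k, hk1, hk2⟩ := hpow _ hy
      have hkd : k / n < ℓ := by
        have h1 : k / n ≤ (2 ^ n - 2) / n := Nat.div_le_div_right (by omega)
        omega
      have h1 : n * (k / n) + k % n = k := Nat.div_add_mod k n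
      have h2 : k % n < n := Nat.mod_lt _ (by omega)
      have hcval : c ⟨k / n, hkd⟩ = min (n * (k / n)) (2 ^ n - 1 - n) := by
        rw [hc]
        simp [mul_comm]
      have hcle : c ⟨k / n, hkd⟩ ≤ k ∧ k < c ⟨k / n, hkd⟩ + n := by
        rw [hcval]; omega
      refine ⟨⟨k / n, hkd⟩, ?_⟩
      rw [hT]
      refine Finset.mem_image.mpr ⟨⟨k - c ⟨k / n, hkd⟩, by omega⟩, Finset.mem_univ _, ?_⟩
      show e (a ^ (c ⟨k / n, hkd⟩ + (k - c ⟨k / n, hkd⟩))) = x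
      rw [Nat.add_sub_cancel' hcle.1, hk2, e.apply_symm_apply]
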